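/- Let a, b ∈ (−1/2, 1/2) and let ν ≥ 0 be a real number. Then the modified Jacobi coefficient satisfies q_ν^{(a,b)}(t) > 0 for every t ∈ (0,π). -/

import Mathlib

open Real Set

/-- The coefficient in the modified Jacobi differential equation. -/
noncomputable def jacobiQ (a b ν t : ℝ) : ℝ :=
  ν * (a + b + ν + 1)
    + (1 / 2) * (1 / Real.sin t) ^ 2 * (-(b - a) * Real.cos t + a + b + 1)
    - (1 / 4) * ((a + b + 1) * (Real.cos t / Real.sin t)
        - (b - a) * (1 / Real.sin t)) ^ 2

theorem jacobiQ_pos (a b ν : ℝ) (ha : a ∈ Ioo (-(1 : ℝ) / 2) (1 / 2))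
    (hb : b ∈ Ioo (-(1 : ℝ) / 2) (1 / 2)) (hν : 0 ≤ ν) :
    ∀ t ∈ Ioo 0 Real.pi, 0 < jacobiQ a b ν t := by
  rintro t ⟨ht0, htπ⟩
  obtain ⟨ha1, ha2⟩ := ha
  obtain ⟨hb1, hb2⟩ := hb
  have hs : 0 < Real.sin t := Real.sin_pos_of_pos_of_lt_pi ht0 htπ
  set s := Real.sin t with hsdef
  set c := Real.cos t with hcdef
  have hsc : c ^ 2 + s ^ 2 = 1 := by
    rw [hsdef, hcdef]; exact Real.cos_sq_add_sin_sq t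
  have hc2 : c ^ 2 < 1 := by nlinarith
  have hc1 : -1 < c := by nlinarith
  have hc1' : c < 1 := by nlinarith
  have hs0 : s ≠ 0 := ne_of_gt hs
  have key : jacobiQ a b ν t = ν * (a + b + ν + 1)
      + (2 * (a + b + 1 - (b - a) * c) - ((a + b + 1) * c - (b - a)) ^ 2)
        / (4 * s ^ 2) := by
    unfold jacobiQ
    rw [← hsdef, ← hcdef]
    field_simp
    ring
  rw [key]
  have h1 : 0 ≤ ν * (a + b + ν + 1) := by nlinarith
  have h2 : 0 < 2 * (a + b + 1 - (b - a) * c) - ((a + b + 1) * c - (b - a)) ^ 2 := by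
    nlinarith [mul_pos (by linarith : (0:ℝ) < 1 + c)
        (mul_pos (by linarith : (0:ℝ) < 2*a+1) (by linarith : (0:ℝ) < 1-2*a)),
      mul_pos (by linarith : (0:ℝ) < 1 - c)
        (mul_pos (by linarith : (0:ℝ) < 2*b+1) (by linarith : (0:ℝ) < 1-2*b)),
      mul_nonneg (sq_nonneg (a+b+1)) (by nlinarith : (0:ℝ) ≤ 1 - c^2)]
  positivity
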